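/- arXiv:1903.00373 — 3 statements merged into one kernel-verified Lean document; each statement's English description precedes it below -/
import Mathlib

section
/- Define F : ℂ² → ℂ by F(x,z) = x(z² − 2z + x)²/(z² − 2xz + x)². Then F is a rational first integral of the Riccati foliation Ric̃ with slope field dz/dx = z²/(4x(x−1)) + z/(2x) − 1/(4(x−1)) = (z² + 2(x−1)z − x)/(4x(x−1)): for every (x,z) ∈ ℂ² with x ≠ 0, x ≠ 1 and z² − 2xz + x ≠ 0, one has ∂F/∂x (x,z) + ((z² + 2(x−1)z − x)/(4x(x−1)))·∂F/∂z (x,z) = 0. -/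
/-- The first integral of the Riccati foliation `Ric̃`. -/
noncomputable def Fint (x z : ℂ) : ℂ :=
  x * (z ^ 2 - 2 * z + x) ^ 2 / (z ^ 2 - 2 * x * z + x) ^ 2

/-- `F(x,z) = x(z² − 2z + x)²/(z² − 2xz + x)²` is a rational first integral of the
Riccati foliation with slope field
`dz/dx = z²/(4x(x−1)) + z/(2x) − 1/(4(x−1)) = (z² + 2(x−1)z − x)/(4x(x−1))`:
for every `(x,z)` with `x ≠ 0`, `x ≠ 1` and `z² − 2xz + x ≠ 0` one has
`∂F/∂x + slope · ∂F/∂z = 0`. -/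
theorem first_integral_of_riccati (x z : ℂ) (hx0 : x ≠ 0) (hx1 : x ≠ 1)
    (hden : z ^ 2 - 2 * x * z + x ≠ 0) :
    z ^ 2 / (4 * x * (x - 1)) + z / (2 * x) - 1 / (4 * (x - 1))
      = (z ^ 2 + 2 * (x - 1) * z - x) / (4 * x * (x - 1)) ∧
    deriv (fun x' => Fint x' z) x
      + (z ^ 2 + 2 * (x - 1) * z - x) / (4 * x * (x - 1))
        * deriv (fun z' => Fint x z') z = 0 := by
  have hx1' : x - 1 ≠ 0 := sub_ne_zero.mpr hx1
  have h2x : (2:ℂ) * x ≠ 0 := by simp [hx0]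
  have h41 : (4:ℂ) * (x - 1) ≠ 0 := by simp [hx1']
  have h4 : (4:ℂ) * x * (x - 1) ≠ 0 := by simp [hx0, hx1']
  constructor
  · have e1 : z / (2 * x) = (2 * (x - 1) * z) / (4 * x * (x - 1)) := by
      rw [div_eq_div_iff h2x h4]; ring
    have e2 : 1 / (4 * (x - 1)) = x / (4 * x * (x - 1)) := by
      rw [div_eq_div_iff h41 h4]; ring
    rw [e1, e2, ← add_div, div_sub_div_same]
  · -- derivative in x
    have hNx : HasDerivAt (fun x' => x' * (z ^ 2 - 2 * z + x') ^ 2)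
        ((z ^ 2 - 2 * z + x) ^ 2 + x * (2 * (z ^ 2 - 2 * z + x))) x := by
      have h1 : HasDerivAt (fun x' : ℂ => z ^ 2 - 2 * z + x') 1 x :=
        (hasDerivAt_id x).const_add _
      have h2 := ((h1.pow 2).const_mul x).add_const 0
      have h3 := (hasDerivAt_id x).mul (h1.pow 2)
      refine h3.congr_deriv ?_
      simp only [id_eq, Pi.pow_apply]
      ring
    have hDx : HasDerivAt (fun x' => (z ^ 2 - 2 * x' * z + x') ^ 2)
        (2 * (z ^ 2 - 2 * x * z + x) * (1 - 2 * z)) x := by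
      have h1 : HasDerivAt (fun x' : ℂ => z ^ 2 - 2 * x' * z + x') (1 - 2 * z) x := by
        have := (((hasDerivAt_id x).const_mul 2).mul_const z).const_sub (z ^ 2)
        have h2 := this.add (hasDerivAt_id x)
        exact h2.congr_deriv (by ring)
      have := h1.pow 2
      refine this.congr_deriv ?_
      ring
    have hX : HasDerivAt (fun x' => Fint x' z)
        ((((z ^ 2 - 2 * z + x) ^ 2 + x * (2 * (z ^ 2 - 2 * z + x)))
            * (z ^ 2 - 2 * x * z + x) ^ 2
          - x * (z ^ 2 - 2 * z + x) ^ 2 * (2 * (z ^ 2 - 2 * x * z + x) * (1 - 2 * z)))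
          / ((z ^ 2 - 2 * x * z + x) ^ 2) ^ 2) x := by
      exact hNx.div hDx (pow_ne_zero 2 hden)
    have hNz : HasDerivAt (fun z' => x * (z' ^ 2 - 2 * z' + x) ^ 2)
        (x * (2 * (z ^ 2 - 2 * z + x) * (2 * z - 2))) z := by
      have h1 : HasDerivAt (fun z' : ℂ => z' ^ 2 - 2 * z' + x) (2 * z - 2) z := by
        have := ((hasDerivAt_pow 2 z).sub ((hasDerivAt_id z).const_mul 2)).add_const x
        exact this.congr_deriv (by ring)
      have := (h1.pow 2).const_mul x
      exact this.congr_deriv (by ring)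
    have hDz : HasDerivAt (fun z' => (z' ^ 2 - 2 * x * z' + x) ^ 2)
        (2 * (z ^ 2 - 2 * x * z + x) * (2 * z - 2 * x)) z := by
      have h1 : HasDerivAt (fun z' : ℂ => z' ^ 2 - 2 * x * z' + x) (2 * z - 2 * x) z := by
        have := ((hasDerivAt_pow 2 z).sub ((hasDerivAt_id z).const_mul (2 * x))).add_const x
        exact this.congr_deriv (by ring)
      have := h1.pow 2
      exact this.congr_deriv (by ring)
    have hZ : HasDerivAt (fun z' => Fint x z')
        ((x * (2 * (z ^ 2 - 2 * z + x) * (2 * z - 2)) * (z ^ 2 - 2 * x * z + x) ^ 2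
          - x * (z ^ 2 - 2 * z + x) ^ 2 * (2 * (z ^ 2 - 2 * x * z + x) * (2 * z - 2 * x)))
          / ((z ^ 2 - 2 * x * z + x) ^ 2) ^ 2) z := by
      exact hNz.div hDz (pow_ne_zero 2 hden)
    rw [hX.deriv, hZ.deriv]
    field_simp
    ring
end

section
/- Let t ∈ ℂ with t ≠ 0 and t ≠ 1. Let (x₀, y₀) and (u, v) be points of ℂ² satisfying y₀² = x₀(x₀−1)(x₀−t) and v² = u(u−1)(u−t) (affine points of the elliptic curve C), with y₀ ≠ 0 and x₀ ≠ u, and set z = (1−x₀)(y₀u − x₀v)/(y₀(u − x₀)) (the value at (u,v) of the minimal section through (x₀,y₀)). Then x₀ satisfies the quadratic equation (★): (u−z)²x₀² + (−(t+u)z² + 2u(t+1)z − u(t+u))x₀ + tu(z−1)² = 0. -/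
/-- Let `(x₀,y₀)` and `(u,v)` be affine points of the elliptic curve
`y² = x(x−1)(x−t)` with `y₀ ≠ 0` and `x₀ ≠ u`, and let
`z = (1−x₀)(y₀u − x₀v)/(y₀(u − x₀))` be the value at `(u,v)` of the minimal section
through `(x₀,y₀)`. Then `x₀` satisfies the quadratic equation
`(★): (u−z)²x₀² + (−(t+u)z² + 2u(t+1)z − u(t+u))x₀ + tu(z−1)² = 0`. -/
theorem minimal_section_quadratic (t : ℂ) (ht0 : t ≠ 0) (ht1 : t ≠ 1)
    (x₀ y₀ u v : ℂ) (hP : y₀ ^ 2 = x₀ * (x₀ - 1) * (x₀ - t))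
    (hQ : v ^ 2 = u * (u - 1) * (u - t)) (hy₀ : y₀ ≠ 0) (hx₀u : x₀ ≠ u)
    (z : ℂ) (hz : z = (1 - x₀) * (y₀ * u - x₀ * v) / (y₀ * (u - x₀))) :
    (u - z) ^ 2 * x₀ ^ 2
      + (-(t + u) * z ^ 2 + 2 * u * (t + 1) * z - u * (t + u)) * x₀
      + t * u * (z - 1) ^ 2 = 0 := by
  have hD : y₀ * (u - x₀) ≠ 0 :=
    mul_ne_zero hy₀ (sub_ne_zero.mpr (Ne.symm hx₀u))
  have hz' : z * (y₀ * (u - x₀)) = (1 - x₀) * (y₀ * u - x₀ * v) := by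
    rw [hz]; field_simp
  have key : ((u - z) ^ 2 * x₀ ^ 2
      + (-(t + u) * z ^ 2 + 2 * u * (t + 1) * z - u * (t + u)) * x₀
      + t * u * (z - 1) ^ 2) * (y₀ * (u - x₀)) ^ 2 = 0 := by
    linear_combination
      ((x₀ - t) * (x₀ - u) * (z * (y₀ * (u - x₀)) + (1 - x₀) * (y₀ * u - x₀ * v))
        - 2 * u * (y₀ * (u - x₀)) * (x₀ - 1) * (x₀ - t)) * hz'
      + (-x₀*u^2*t + x₀*u^3 + x₀*u^3*t - x₀*u^4 + x₀^2*u*t - x₀^2*u^2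
          - x₀^2*u^3*t + x₀^2*u^4 - x₀^3*u*t + x₀^3*u^2 + x₀^3*u^2*t - x₀^3*u^3) * hP
      + (x₀^2*u*t - x₀^3*t - x₀^3*u - 2*x₀^3*u*t + x₀^4 + 2*x₀^4*t + 2*x₀^4*u
          + x₀^4*u*t - 2*x₀^5 - x₀^5*t - x₀^5*u + x₀^6) * hQ
  exact (mul_eq_zero.mp key).resolve_right (pow_ne_zero 2 hD)
end

section
/- Let t ∈ ℂ with t ≠ 0 and t ≠ 1, let (u,v) ∈ ℂ² satisfy v² = u(u−1)(u−t) with v ≠ 0, and let z ∈ ℂ with z ≠ u. Then the set of points (x₀, y₀) ∈ ℂ² with y₀² = x₀(x₀−1)(x₀−t), y₀ ≠ 0, x₀ ≠ u and z = (1−x₀)(y₀u − x₀v)/(y₀(u − x₀)) has at most two elements. In other words, at most two minimal sections of S₁ pass through any given point of C × ℙ¹ off the fiber direction, so the minimal sections define a (singular holomorphic) 2-web. -/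
/-- At most two minimal sections of `S₁` pass through any given point: for an affine
point `(u,v)` of the elliptic curve `y² = x(x−1)(x−t)` with `v ≠ 0` and any `z ≠ u`,
the set of affine points `(x₀,y₀)` of the curve with `y₀ ≠ 0`, `x₀ ≠ u` whose associated
minimal section `z = (1−x₀)(y₀x − x₀y)/(y₀(x−x₀))` passes through `(u,v,z)` has at most
two elements; so the minimal sections define a (singular holomorphic) 2-web. -/
theorem at_most_two_minimal_sections (t : ℂ) (ht0 : t ≠ 0) (ht1 : t ≠ 1)
    (u v : ℂ) (hQ : v ^ 2 = u * (u - 1) * (u - t)) (hv : v ≠ 0)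
    (z : ℂ) (hzu : z ≠ u) :
    {p : ℂ × ℂ | p.2 ^ 2 = p.1 * (p.1 - 1) * (p.1 - t) ∧ p.2 ≠ 0 ∧ p.1 ≠ u ∧
      z = (1 - p.1) * (p.2 * u - p.1 * v) / (p.2 * (u - p.1))}.encard ≤ 2 := by
  set A : ℂ := u - z with hA
  set B : ℂ := u * (z - 1) with hB
  set M : ℂ := u * (u - 1) * (u - t) with hM
  have hAne : A ≠ 0 := sub_ne_zero.2 (Ne.symm hzu)
  set a : ℂ := -(A ^ 2) with ha
  set b : ℂ := M - 2 * A * B + (t - u) * A ^ 2 with hb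
  set c : ℂ := -M - B ^ 2 + 2 * t * A * B + u * b with hc
  have hane : a ≠ 0 := by
    simp only [ha, neg_ne_zero]
    exact pow_ne_zero 2 hAne
  obtain ⟨s, hs⟩ := IsAlgClosed.exists_pow_nat_eq (k := ℂ) (b ^ 2 - 4 * a * c) (by norm_num : 0 < 2)
  set r₁ : ℂ := (-b + s) / (2 * a) with hr₁
  set r₂ : ℂ := (-b - s) / (2 * a) with hr₂
  -- any root of the quadratic is r₁ or r₂
  have quad : ∀ x : ℂ, a * x ^ 2 + b * x + c = 0 → x = r₁ ∨ x = r₂ := by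
    intro x hx
    have hprod : (2 * a * x + b - s) * (2 * a * x + b + s) = 0 := by
      linear_combination 4 * a * hx - hs
    rcases mul_eq_zero.1 hprod with h | h
    · left
      rw [hr₁]
      field_simp
      linear_combination h
    · right
      rw [hr₂]
      field_simp
      linear_combination h
    -- end
  set g : ℂ → ℂ := fun x => x * (x - 1) * v / (A * x + B) with hg
  have hsub : {p : ℂ × ℂ | p.2 ^ 2 = p.1 * (p.1 - 1) * (p.1 - t) ∧ p.2 ≠ 0 ∧ p.1 ≠ u ∧
      z = (1 - p.1) * (p.2 * u - p.1 * v) / (p.2 * (u - p.1))} ⊆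
      {(r₁, g r₁), (r₂, g r₂)} := by
    rintro ⟨x₀, y₀⟩ ⟨h₁, h₂, h₃, h₄⟩
    simp only at h₁ h₂ h₃ h₄
    have hx0 : x₀ ≠ 0 := by
      rintro rfl
      apply h₂
      have : y₀ ^ 2 = 0 := by rw [h₁]; ring
      exact pow_eq_zero_iff (by norm_num) |>.1 this
    have hx1 : x₀ ≠ 1 := by
      rintro rfl
      apply h₂
      have : y₀ ^ 2 = 0 := by rw [h₁]; ring
      exact pow_eq_zero_iff (by norm_num) |>.1 this
    have hux : u - x₀ ≠ 0 := sub_ne_zero.2 (Ne.symm h₃)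
    rw [eq_div_iff (mul_ne_zero h₂ hux)] at h₄
    have hD : y₀ * (A * x₀ + B) = x₀ * (x₀ - 1) * v := by
      rw [hA, hB]; linear_combination h₄
    have hDne : A * x₀ + B ≠ 0 := by
      intro h0
      rw [h0, mul_zero] at hD
      rcases mul_eq_zero.1 hD.symm with h | h
      · rcases mul_eq_zero.1 h with h' | h'
        · exact hx0 h'
        · exact hx1 (sub_eq_zero.1 h')
      · exact hv h
    have hy : y₀ = g x₀ := by
      rw [hg]
      show y₀ = x₀ * (x₀ - 1) * v / (A * x₀ + B); rw [eq_div_iff hDne]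
      linear_combination hD
    have key : x₀ * (x₀ - 1) * ((x₀ - t) * (A * x₀ + B) ^ 2 - x₀ * (x₀ - 1) * M) = 0 := by
      rw [hM]
      linear_combination (y₀ * (A * x₀ + B) + x₀ * (x₀ - 1) * v) * hD
        - (A * x₀ + B) ^ 2 * h₁ + (x₀ * (x₀ - 1)) ^ 2 * hQ
    have hfac : x₀ * (x₀ - 1) * ((x₀ - t) * (A * x₀ + B) ^ 2 - x₀ * (x₀ - 1) * M) =
        -(x₀ * ((x₀ - 1) * ((x₀ - u) * (a * x₀ ^ 2 + b * x₀ + c)))) := by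
      rw [ha, hb, hc, hA, hB, hM]; ring
    rw [hfac, neg_eq_zero] at key
    have hxu : x₀ - u ≠ 0 := sub_ne_zero.2 h₃
    have hquad0 : a * x₀ ^ 2 + b * x₀ + c = 0 := by
      rcases mul_eq_zero.1 key with h | h
      · exact absurd h hx0
      rcases mul_eq_zero.1 h with h' | h'
      · exact absurd h' (sub_ne_zero.2 hx1)
      rcases mul_eq_zero.1 h' with h'' | h''
      · exact absurd h'' hxu
      · exact h''
    rcases quad x₀ hquad0 with h | h
    · left; subst h; exact Prod.ext rfl hy
    · right; subst h; exact Prod.ext rfl hy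
  calc ({p : ℂ × ℂ | p.2 ^ 2 = p.1 * (p.1 - 1) * (p.1 - t) ∧ p.2 ≠ 0 ∧ p.1 ≠ u ∧
      z = (1 - p.1) * (p.2 * u - p.1 * v) / (p.2 * (u - p.1))}).encard
      ≤ ({(r₁, g r₁), (r₂, g r₂)} : Set (ℂ × ℂ)).encard := Set.encard_le_encard hsub
    _ ≤ ({(r₂, g r₂)} : Set (ℂ × ℂ)).encard + 1 := Set.encard_insert_le _ _
    _ = 2 := by rw [Set.encard_singleton]; rfl
end
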